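/- For any positive integers n and c, the constant term of ∏_{1≤i<j≤n}(1 - x_i/x_j)^c (1 - x_j/x_i)^c as a Laurent polynomial over ℚ equals (cn)!/(c!)^n (Dyson's identity, equal-parameter case). -/

import Mathlib

open Finset

/-- The Laurent monomial `x_i^d` in the ring of Laurent polynomials in `n` variables,
modeled as the monoid algebra of `ℚ` over the additive group of exponent vectors. -/
noncomputable def lvar (n : ℕ) (i : Fin n) (d : ℤ) : AddMonoidAlgebra ℚ (Fin n → ℤ) :=
  AddMonoidAlgebra.single (Pi.single i d) 1

/-- The constant term of a Laurent polynomial: the coefficient of the zero exponent vector. -/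
noncomputable def constTerm (n : ℕ) (P : AddMonoidAlgebra ℚ (Fin n → ℤ)) : ℚ := P.coeff 0

variable {n : ℕ}

lemma lvar_ne (i : Fin n) : lvar n i 1 ≠ 0 := by
  unfold lvar
  exact fun h => one_ne_zero (AddMonoidAlgebra.single_eq_zero.1 h)

lemma pisingle_ne {i j : Fin n} (h : i ≠ j) :
    Pi.single (M := fun _ => ℤ) i 1 ≠ Pi.single j 1 := by
  intro he
  have := congrFun he i
  simp [Pi.single_eq_same, Pi.single_eq_of_ne h] at this

lemma lvar_ne_lvar {i j : Fin n} (h : i ≠ j) : lvar n i 1 ≠ lvar n j 1 := by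
  intro he
  exact pisingle_ne h (AddMonoidAlgebra.single_left_injective (one_ne_zero (α := ℚ)) he)

lemma lvar_mul_lvar_inv (i : Fin n) : lvar n i 1 * lvar n i (-1) = 1 := by
  unfold lvar
  rw [AddMonoidAlgebra.single_mul_single, ← Pi.single_add]
  norm_num
  rfl

noncomputable def fac (n : ℕ) (j i : Fin n) : AddMonoidAlgebra ℚ (Fin n → ℤ) :=
  1 - lvar n j 1 * lvar n i (-1)

noncomputable def Pp (T : Finset (Fin n)) (j : Fin n) : AddMonoidAlgebra ℚ (Fin n → ℤ) :=
  ∏ i ∈ T.erase j, fac n j i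

lemma key (T : Finset (Fin n)) (hT : T.Nonempty) :
    ∑ j ∈ T, ∏ k ∈ T.erase j, Pp T k = ∏ k ∈ T, Pp T k := by
  set R := AddMonoidAlgebra ℚ (Fin n → ℤ) with hR
  letI : IsDomain R := NoZeroDivisors.to_isDomain _
  set K := FractionRing R with hK
  have hinj : Function.Injective (algebraMap R K) := IsFractionRing.injective R K
  apply hinj
  set ξ : Fin n → K := fun i => algebraMap R K (lvar n i 1) with hξdef
  have hξ : ∀ i, ξ i ≠ 0 := fun i h => lvar_ne i (hinj (h.trans (map_zero _).symm))
  have hξne : ∀ i j : Fin n, i ≠ j → ξ i ≠ ξ j := fun i j h he =>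
    lvar_ne_lvar h (hinj he)
  have himg : ∀ i, algebraMap R K (lvar n i (-1)) = (ξ i)⁻¹ := by
    intro i
    refine eq_inv_of_mul_eq_one_left ?_
    rw [hξdef]
    show algebraMap R K _ * algebraMap R K _ = 1
    rw [← map_mul, mul_comm, lvar_mul_lvar_inv, map_one]
  have hQ : ∀ j, algebraMap R K (Pp T j) = ∏ i ∈ T.erase j, (1 - ξ j * (ξ i)⁻¹) := by
    intro j
    rw [Pp, map_prod]
    refine Finset.prod_congr rfl fun i _ => ?_
    rw [fac, map_sub, map_one, map_mul, himg]
  set Q : Fin n → K := fun j => ∏ i ∈ T.erase j, (1 - ξ j * (ξ i)⁻¹) with hQdef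
  set L : Fin n → K := fun j => Polynomial.eval 0 (Lagrange.basis T ξ j) with hLdef
  have hvs : Set.InjOn ξ T := fun i _ j _ h => by
    by_contra hne; exact hξne i j hne h
  have hL : ∑ j ∈ T, L j = 1 := by
    have := Lagrange.sum_basis hvs hT
    calc ∑ j ∈ T, L j = Polynomial.eval 0 (∑ j ∈ T, Lagrange.basis T ξ j) := by
          rw [Polynomial.eval_finset_sum]
      _ = 1 := by rw [this, Polynomial.eval_one]
  have hcancel : ∀ j ∈ T, Q j * L j = 1 := by
    intro j _
    rw [hQdef, hLdef]
    simp only [Lagrange.basis, Polynomial.eval_prod]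
    rw [← Finset.prod_mul_distrib]
    refine Finset.prod_eq_one fun i hi => ?_
    have hi' := Finset.mem_erase.1 hi
    have h1 : ξ i ≠ 0 := hξ i
    have h2 : ξ j - ξ i ≠ 0 := sub_ne_zero_of_ne (hξne j i (Ne.symm hi'.1))
    simp only [Lagrange.basisDivisor, Polynomial.eval_mul, Polynomial.eval_C,
      Polynomial.eval_sub, Polynomial.eval_X]
    nth_rewrite 1 [← mul_inv_cancel₀ h1]
    rw [show (ξ i * (ξ i)⁻¹ - ξ j * (ξ i)⁻¹) * ((ξ j - ξ i)⁻¹ * (0 - ξ i)) =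
      ((ξ j - ξ i) * (ξ j - ξ i)⁻¹) * ((ξ i)⁻¹ * ξ i) by ring,
      mul_inv_cancel₀ h2, inv_mul_cancel₀ h1, mul_one]
  rw [map_sum, map_prod]
  simp only [map_prod, hQ]
  calc ∑ j ∈ T, ∏ k ∈ T.erase j, Q k
      = ∑ j ∈ T, (∏ k ∈ T.erase j, Q k) * (Q j * L j) := by
        refine Finset.sum_congr rfl fun j hj => ?_
        rw [hcancel j hj, mul_one]
    _ = ∑ j ∈ T, (∏ k ∈ T, Q k) * L j := by
        refine Finset.sum_congr rfl fun j hj => ?_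
        rw [← mul_assoc, Finset.prod_erase_mul _ _ hj]
    _ = (∏ k ∈ T, Q k) * ∑ j ∈ T, L j := by rw [Finset.mul_sum]
    _ = ∏ k ∈ T, Q k := by rw [hL, mul_one]

noncomputable def F (T : Finset (Fin n)) (a : Fin n → ℕ) : AddMonoidAlgebra ℚ (Fin n → ℤ) :=
  ∏ j ∈ T, (Pp T j) ^ (a j)

lemma F_eq (T : Finset (Fin n)) (a : Fin n → ℕ) (ha : ∀ k ∈ T, 1 ≤ a k) :
    F T a = (∏ k ∈ T, Pp T k ^ (a k - 1)) * ∏ k ∈ T, Pp T k := by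
  rw [F, ← Finset.prod_mul_distrib]
  exact Finset.prod_congr rfl fun k hk => by
    rw [← pow_succ, Nat.sub_add_cancel (ha k hk)]

lemma F_upd (T : Finset (Fin n)) (a : Fin n → ℕ) (j : Fin n) (hj : j ∈ T)
    (ha : ∀ k ∈ T, 1 ≤ a k) :
    F T (Function.update a j (a j - 1)) =
      (∏ k ∈ T, Pp T k ^ (a k - 1)) * ∏ k ∈ T.erase j, Pp T k := by
  rw [F, ← Finset.mul_prod_erase T _ hj, ← Finset.mul_prod_erase T (fun k => Pp T k ^ (a k - 1)) hj]
  rw [Function.update_self, mul_assoc, ← Finset.prod_mul_distrib]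
  congr 1
  refine Finset.prod_congr rfl fun k hk => ?_
  rw [Function.update_of_ne (Finset.mem_erase.1 hk).1, ← pow_succ,
    Nat.sub_add_cancel (ha k (Finset.mem_erase.1 hk).2)]

lemma F_recur (T : Finset (Fin n)) (hT : T.Nonempty) (a : Fin n → ℕ)
    (ha : ∀ k ∈ T, 1 ≤ a k) :
    F T a = ∑ j ∈ T, F T (Function.update a j (a j - 1)) := by
  rw [F_eq T a ha, ← key T hT, Finset.mul_sum]
  exact Finset.sum_congr rfl fun j hj => (F_upd T a j hj ha).symm

open scoped Classical in
lemma supp_mul_closed (j : Fin n) (x y : AddMonoidAlgebra ℚ (Fin n → ℤ))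
    (hx : ∀ v ∈ x.coeff.support, v j = 0) (hy : ∀ v ∈ y.coeff.support, v j = 0) :
    ∀ v ∈ (x * y).coeff.support, v j = 0 := by
  intro v hv
  have := AddMonoidAlgebra.support_coeff_mul_subset x y hv
  rw [Finset.mem_add] at this
  obtain ⟨p, hp, q, hq, rfl⟩ := this
  simp [hx p hp, hy q hq]

lemma supp_one (j : Fin n) : ∀ v ∈ (1 : AddMonoidAlgebra ℚ (Fin n → ℤ)).coeff.support, v j = 0 := by
  intro v hv
  have := Finsupp.support_single_subset hv
  simp only [Finset.mem_singleton] at this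
  simp [this]

lemma supp_pow_closed (j : Fin n) (x : AddMonoidAlgebra ℚ (Fin n → ℤ))
    (hx : ∀ v ∈ x.coeff.support, v j = 0) (m : ℕ) : ∀ v ∈ (x ^ m).coeff.support, v j = 0 := by
  induction m with
  | zero => simpa using supp_one j
  | succ m ih => rw [pow_succ]; exact supp_mul_closed j _ _ ih hx

lemma supp_fac {j k i : Fin n} (hk : k ≠ j) (hi : i ≠ j) :
    ∀ v ∈ (fac n k i).coeff.support, v j = 0 := by
  intro v hv
  rw [fac, lvar, lvar, AddMonoidAlgebra.single_mul_single, one_mul,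
    AddMonoidAlgebra.coeff_sub, AddMonoidAlgebra.coeff_single] at hv
  have := Finsupp.support_sub (G := ℚ) hv
  rw [Finset.mem_union] at this
  rcases this with h | h
  · exact supp_one j v h
  · have := Finsupp.support_single_subset h
    simp only [Finset.mem_singleton] at this
    subst this
    simp [Pi.single_apply, Ne.symm hk, Ne.symm hi]

lemma supp_F (T : Finset (Fin n)) (j : Fin n) (hj : j ∉ T) (a : Fin n → ℕ) :
    ∀ v ∈ (F T a).coeff.support, v j = 0 := by
  rw [F]
  refine Finset.prod_induction _ (fun x : AddMonoidAlgebra ℚ (Fin n → ℤ) => ∀ v ∈ x.coeff.support, v j = 0)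
    (supp_mul_closed j) (supp_one j) ?_
  intro k hk
  refine supp_pow_closed j _ ?_ _
  rw [Pp]
  refine Finset.prod_induction _ (fun x : AddMonoidAlgebra ℚ (Fin n → ℤ) => ∀ v ∈ x.coeff.support, v j = 0)
    (supp_mul_closed j) (supp_one j) ?_
  intro i hi
  exact supp_fac (fun h => hj (h ▸ hk)) (fun h => hj (h ▸ (Finset.mem_erase.1 hi).2))

/-- predicate: `x = 1 + (terms with j-exponent < 0)` -/
def NegOne (j : Fin n) (x : AddMonoidAlgebra ℚ (Fin n → ℤ)) : Prop :=
  ∀ v ∈ (x - 1).coeff.support, v j < 0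

lemma negOne_one (j : Fin n) : NegOne j 1 := by
  intro v hv
  simp at hv

lemma negOne_mul (j : Fin n) (x y : AddMonoidAlgebra ℚ (Fin n → ℤ))
    (hx : NegOne j x) (hy : NegOne j y) : NegOne j (x * y) := by
  classical
  intro v hv
  have hxy : x * y - 1 = (x - 1) + ((y - 1) + (x - 1) * (y - 1)) := by ring
  rw [hxy, AddMonoidAlgebra.coeff_add, AddMonoidAlgebra.coeff_add] at hv
  rcases Finset.mem_union.1 (Finsupp.support_add hv) with h | h
  · exact hx v h
  rcases Finset.mem_union.1 (Finsupp.support_add h) with h2 | h2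
  · exact hy v h2
  · obtain ⟨p, hp, q, hq, rfl⟩ := Finset.mem_add.1 (AddMonoidAlgebra.support_coeff_mul_subset _ _ h2)
    have := hx p hp; have := hy q hq
    simp only [Pi.add_apply]
    omega

lemma negOne_pow (j : Fin n) (x : AddMonoidAlgebra ℚ (Fin n → ℤ)) (hx : NegOne j x) :
    ∀ m : ℕ, NegOne j (x ^ m) := by
  intro m
  induction m with
  | zero => simpa using negOne_one j
  | succ m ih => rw [pow_succ]; exact negOne_mul j _ _ ih hx

lemma negOne_fac {j k : Fin n} (hk : k ≠ j) : NegOne j (fac n k j) := by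
  intro v hv
  rw [fac, lvar, lvar, AddMonoidAlgebra.single_mul_single, one_mul, sub_sub_cancel_left] at hv
  rw [AddMonoidAlgebra.coeff_neg, AddMonoidAlgebra.coeff_single, Finsupp.support_neg] at hv
  have := Finsupp.support_single_subset hv
  simp only [Finset.mem_singleton] at this
  subst this
  simp [Pi.single_apply, Ne.symm hk]

lemma ct_mul_negOne (j : Fin n) (P G : AddMonoidAlgebra ℚ (Fin n → ℤ))
    (hP : ∀ v ∈ P.coeff.support, v j = 0) (hG : NegOne j G) :
    (P * G).coeff 0 = P.coeff 0 := by
  classical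
  have : P * G = P + P * (G - 1) := by ring
  rw [this, AddMonoidAlgebra.coeff_add, Finsupp.add_apply]
  have h0 : (P * (G - 1)).coeff 0 = 0 := by
    rw [← Finsupp.notMem_support_iff]
    intro h
    obtain ⟨p, hp, q, hq, hpq⟩ := Finset.mem_add.1 (AddMonoidAlgebra.support_coeff_mul_subset _ _ h)
    have h1 := hP p hp
    have h2 := hG q hq
    have := congrFun hpq j
    simp only [Pi.add_apply, Pi.zero_apply] at this
    omega
  rw [h0, add_zero]

lemma F_boundary (T : Finset (Fin n)) (j : Fin n) (hj : j ∈ T) (a : Fin n → ℕ)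
    (haj : a j = 0) :
    F T a = F (T.erase j) a * ∏ k ∈ T.erase j, (fac n k j) ^ (a k) := by
  rw [F, ← Finset.mul_prod_erase T _ hj, haj, pow_zero, one_mul, F,
    ← Finset.prod_mul_distrib]
  refine Finset.prod_congr rfl fun k hk => ?_
  rw [← mul_pow]
  congr 1
  have hjk : j ∈ T.erase k := Finset.mem_erase.2 ⟨fun h => (Finset.mem_erase.1 hk).1 h.symm, hj⟩
  rw [Pp, Pp, ← Finset.mul_prod_erase (T.erase k) (fac n k) hjk, mul_comm,
    Finset.erase_right_comm]

lemma ct_one : (1 : AddMonoidAlgebra ℚ (Fin n → ℤ)).coeff 0 = 1 := by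
  rw [AddMonoidAlgebra.one_def]; exact Finsupp.single_eq_same

lemma main (N : ℕ) : ∀ (T : Finset (Fin n)) (a : Fin n → ℕ), T.card + ∑ i ∈ T, a i ≤ N →
    (F T a).coeff 0 = ((∑ i ∈ T, a i).factorial : ℚ) / ∏ i ∈ T, ((a i).factorial : ℚ) := by
  induction N with
  | zero =>
    intro T a h
    have : T = ∅ := Finset.card_eq_zero.1 (Nat.le_zero.1 (le_trans (Nat.le_add_right _ _) h))
    subst this
    simp [F, ct_one]
  | succ N ih =>
    intro T a hN
    rcases Finset.eq_empty_or_nonempty T with rfl | hT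
    · simp [F, ct_one]
    by_cases hz : ∃ j ∈ T, a j = 0
    · obtain ⟨j, hj, haj⟩ := hz
      rw [F_boundary T j hj a haj]
      have hGne : NegOne j (∏ k ∈ T.erase j, (fac n k j) ^ (a k)) := by
        refine Finset.prod_induction _ (NegOne j) (negOne_mul j) (negOne_one j) ?_
        intro k hk
        exact negOne_pow j _ (negOne_fac (Finset.mem_erase.1 hk).1) _
      rw [ct_mul_negOne j _ _ (supp_F _ j (Finset.notMem_erase j T) a) hGne]
      have hcard : (T.erase j).card + ∑ i ∈ T.erase j, a i ≤ N := by
        have h1 : (T.erase j).card = T.card - 1 := Finset.card_erase_of_mem hj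
        have h2 : ∑ i ∈ T.erase j, a i = ∑ i ∈ T, a i := Finset.sum_erase T haj
        have h3 : 1 ≤ T.card := Finset.card_pos.2 ⟨j, hj⟩
        omega
      rw [ih (T.erase j) a hcard, Finset.sum_erase T haj,
        Finset.prod_erase T (f := fun i => ((a i).factorial : ℚ)) (by simp [haj])]
    · push_neg at hz
      have ha : ∀ k ∈ T, 1 ≤ a k := fun k hk => Nat.one_le_iff_ne_zero.2 (hz k hk)
      rw [F_recur T hT a ha, AddMonoidAlgebra.coeff_sum, Finset.sum_apply']
      set S := ∑ i ∈ T, a i with hS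
      obtain ⟨j0, hj0⟩ := hT
      have hS1 : 1 ≤ S := le_trans (ha j0 hj0)
        (Finset.single_le_sum (fun i _ => Nat.zero_le _) hj0)
      have hterm : ∀ j ∈ T, (F T (Function.update a j (a j - 1))).coeff 0
          = (a j : ℚ) * (((S-1).factorial : ℚ) / ∏ i ∈ T, ((a i).factorial : ℚ)) := by
        intro j hj
        have hsum : ∑ i ∈ T, Function.update a j (a j - 1) i = S - 1 := by
          rw [Finset.sum_update_of_mem hj]
          have h4 := Finset.add_sum_erase T a hj
          rw [Finset.erase_eq] at h4
          have h5 := ha j hj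
          have h6 := hS1
          omega
        have hb : T.card + ∑ i ∈ T, Function.update a j (a j - 1) i ≤ N := by
          rw [hsum]; omega
        rw [ih T _ hb, hsum]
        have hprod : ∏ i ∈ T, ((Function.update a j (a j - 1) i).factorial : ℚ)
            = ((a j - 1).factorial : ℚ) * ∏ i ∈ T.erase j, ((a i).factorial : ℚ) := by
          rw [← Finset.mul_prod_erase T _ hj, Function.update_self]
          congr 1
          exact Finset.prod_congr rfl fun i hi => by
            rw [Function.update_of_ne (Finset.mem_erase.1 hi).1]
        rw [hprod, ← Finset.mul_prod_erase T (fun i => ((a i).factorial : ℚ)) hj]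
        have hfj : ((a j).factorial : ℚ) = (a j : ℚ) * ((a j - 1).factorial : ℚ) := by
          rw_mod_cast [Nat.mul_factorial_pred (hz j hj)]
        rw [hfj]
        have h1 : ((a j - 1).factorial : ℚ) ≠ 0 := Nat.cast_ne_zero.2 (Nat.factorial_ne_zero _)
        have h2 : (∏ i ∈ T.erase j, ((a i).factorial : ℚ)) ≠ 0 :=
          Finset.prod_ne_zero_iff.2 fun i _ => Nat.cast_ne_zero.2 (Nat.factorial_ne_zero _)
        have h3 : (a j : ℚ) ≠ 0 := Nat.cast_ne_zero.2 (hz j hj)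
        field_simp
      rw [Finset.sum_congr rfl hterm, ← Finset.sum_mul]
      have hcast : ∑ j ∈ T, (a j : ℚ) = (S : ℚ) := by rw [hS]; push_cast; rfl
      rw [hcast, mul_div_assoc']
      congr 1
      rw_mod_cast [Nat.mul_factorial_pred (Nat.one_le_iff_ne_zero.1 hS1)]


theorem dyson (n c : ℕ) (hn : 0 < n) (hc : 0 < c) :
    constTerm n
      (∏ i : Fin n, ∏ j ∈ Finset.univ.filter (fun j => i < j),
        (1 - lvar n i 1 * lvar n j (-1)) ^ c * (1 - lvar n j 1 * lvar n i (-1)) ^ c) =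
      ((c * n).factorial : ℚ) / (c.factorial : ℚ) ^ n := by
  set g : Fin n → Fin n → AddMonoidAlgebra ℚ (Fin n → ℤ) :=
    fun j i => (fac n j i) ^ c with hg
  have hsplit : ∀ j : Fin n, ∏ i ∈ Finset.univ.erase j, g j i =
      (∏ i ∈ Finset.univ.filter (fun i => i < j), g j i) *
        ∏ i ∈ Finset.univ.filter (fun i => j < i), g j i := by
    intro j
    rw [← Finset.prod_filter_mul_prod_filter_not (Finset.univ.erase j) (fun i => i < j)]
    congr 1
    · congr 1
      ext i
      simp only [Finset.mem_filter, Finset.mem_erase, Finset.mem_univ, true_and, and_iff_right_iff_imp]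
      exact fun h => ⟨ne_of_lt h, trivial⟩
    · congr 1
      ext i
      simp only [Finset.mem_filter, Finset.mem_erase, Finset.mem_univ, true_and]
      constructor
      · rintro ⟨⟨h1, -⟩, h2⟩
        exact (not_lt.1 h2).lt_of_ne (Ne.symm h1)
      · exact fun h => ⟨⟨ne_of_gt h, trivial⟩, not_lt.2 h.le⟩
  have hF : F Finset.univ (fun _ => c) =
      (∏ j : Fin n, ∏ i ∈ Finset.univ.filter (fun i => i < j), g j i) *
        ∏ j : Fin n, ∏ i ∈ Finset.univ.filter (fun i => j < i), g j i := by
    rw [F, ← Finset.prod_mul_distrib]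
    refine Finset.prod_congr rfl fun j _ => ?_
    rw [Pp, ← Finset.prod_pow, ← hsplit j]
  have hswap : (∏ j : Fin n, ∏ i ∈ Finset.univ.filter (fun i => i < j), g j i)
      = ∏ i : Fin n, ∏ j ∈ Finset.univ.filter (fun j => i < j), g j i :=
    Finset.prod_comm' (by simp)
  have hLHS : (∏ i : Fin n, ∏ j ∈ Finset.univ.filter (fun j => i < j),
        (1 - lvar n i 1 * lvar n j (-1)) ^ c * (1 - lvar n j 1 * lvar n i (-1)) ^ c)
      = F Finset.univ (fun _ => c) := by
    have : ∀ i : Fin n, ∏ j ∈ Finset.univ.filter (fun j => i < j),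
        (1 - lvar n i 1 * lvar n j (-1)) ^ c * (1 - lvar n j 1 * lvar n i (-1)) ^ c
        = (∏ j ∈ Finset.univ.filter (fun j => i < j), g i j) *
          ∏ j ∈ Finset.univ.filter (fun j => i < j), g j i := by
      intro i
      rw [← Finset.prod_mul_distrib]
      exact Finset.prod_congr rfl fun x _ => by simp [hg, fac]
    rw [Finset.prod_congr rfl fun i _ => this i, Finset.prod_mul_distrib, hF, hswap, mul_comm]
  rw [hLHS]
  show (F Finset.univ (fun _ => c)).coeff 0 = _
  rw [main (n + n * c) Finset.univ (fun _ => c) (by simp [Finset.sum_const, Finset.card_univ, mul_comm])]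
  simp only [Finset.sum_const, Finset.prod_const, Finset.card_univ, Fintype.card_fin, smul_eq_mul]
  rw [Nat.mul_comm n c]
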